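/- arXiv:1201.4161 — 9 statements merged into one kernel-verified Lean document; each statement's English description precedes it below -/
import Mathlib

section
/- Let a > 2 be real, A = [[α, β],[γ, −α]] with det A = 1 and γ ≠ 0, S = [[1,a],[0,1]], and N = A·S with entries of N^k denoted α_k, β_k, γ_k, δ_k. Then for all k ≥ 1: γ_{k+1}² + γ_k² − a·γ·γ_k·γ_{k+1} = γ². -/
theorem stmt_1 (a α β γ : ℝ) (ha : 2 < a) (hγ : γ ≠ 0)
    (A : Matrix (Fin 2) (Fin 2) ℝ) (hA : A = !![α, β; γ, -α]) (hdet : A.det = 1)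
    (S : Matrix (Fin 2) (Fin 2) ℝ) (hS : S = !![1, a; 0, 1])
    (N : Matrix (Fin 2) (Fin 2) ℝ) (hN : N = A * S) :
    ∀ k : ℕ, 1 ≤ k →
      ((N ^ (k + 1)) 1 0) ^ 2 + ((N ^ k) 1 0) ^ 2
        - a * γ * ((N ^ k) 1 0) * ((N ^ (k + 1)) 1 0) = γ ^ 2 := by
  have hdet' : -(α^2) - β*γ = 1 := by
    rw [hA, Matrix.det_fin_two_of] at hdet
    nlinarith [hdet]
  have hNval : N = !![α, α*a + β; γ, γ*a - α] := by
    rw [hN, hA, hS, Matrix.mul_fin_two]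
    congr 1 <;> ring
  have hN2 : N * N = (a*γ) • N - 1 := by
    rw [hNval, Matrix.mul_fin_two]
    ext i j
    fin_cases i <;> fin_cases j <;>
      simp [Matrix.smul_apply, Matrix.sub_apply, Matrix.one_apply] <;> nlinarith [hdet']
  have hrec : ∀ k : ℕ, (N ^ (k+2)) 1 0 = a*γ*((N ^ (k+1)) 1 0) - (N ^ k) 1 0 := by
    intro k
    have h : N ^ (k+2) = (a*γ) • N ^ (k+1) - N ^ k := by
      have : N ^ (k+2) = N ^ k * (N * N) := by
        rw [pow_add, sq]
      rw [this, hN2, Matrix.mul_sub, Matrix.mul_one, Matrix.mul_smul, ← pow_succ]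
    rw [h]
    simp only [Matrix.sub_apply, Matrix.smul_apply, smul_eq_mul]
  intro k hk
  induction k, hk using Nat.le_induction with
  | base =>
      have h0 : (N ^ 0 : Matrix (Fin 2) (Fin 2) ℝ) 1 0 = 0 := by
        simp [Matrix.one_apply]
      have h1 : (N ^ 1) 1 0 = γ := by rw [pow_one, hNval]; simp
      have h2 : (N ^ 2) 1 0 = a*γ*γ := by
        have := hrec 0
        rw [h0, h1] at this
        simpa using this
      rw [h1, h2]; ring
  | succ n hn ih =>
      have hr := hrec n
      rw [show n+1+1 = n+2 from rfl, hr]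
      linear_combination ih
end

section
/- Let a > 2 be real, A = [[α, β],[γ, −α]] with det A = 1 and γ > 0, S = [[1,a],[0,1]], N = A·S, and suppose N is hyperbolic. Write N^k = [[α_k, β_k],[γ_k, δ_k]] and suppose γ_k, γ_{k+1} ≠ 0 and α_{k+1}/γ_{k+1} < α_k/γ_k. Then the shadows of N^{k+1}·∞ and N^k·∞ overlap, i.e. α_{k+1}/γ_{k+1} + 1/(a·γ_{k+1}²) > α_k/γ_k − 1/(a·γ_k²). -/
theorem stmt_4 (a α β γ : ℝ) (ha : 2 < a) (hγ : 0 < γ)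
    (A : Matrix (Fin 2) (Fin 2) ℝ) (hA : A = !![α, β; γ, -α]) (hdet : A.det = 1)
    (S : Matrix (Fin 2) (Fin 2) ℝ) (hS : S = !![1, a; 0, 1])
    (N : Matrix (Fin 2) (Fin 2) ℝ) (hN : N = A * S)
    (hhyp : 2 < |Matrix.trace N|)
    (k : ℕ) (hk : 1 ≤ k)
    (hγk : (N ^ k) 1 0 ≠ 0) (hγk1 : (N ^ (k + 1)) 1 0 ≠ 0)
    (horder : (N ^ (k + 1)) 0 0 / (N ^ (k + 1)) 1 0 < (N ^ k) 0 0 / (N ^ k) 1 0) :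
    (N ^ (k + 1)) 0 0 / (N ^ (k + 1)) 1 0 + 1 / (a * ((N ^ (k + 1)) 1 0) ^ 2)
      > (N ^ k) 0 0 / (N ^ k) 1 0 - 1 / (a * ((N ^ k) 1 0) ^ 2) := by
  have hdet' : α * (-α) - β * γ = 1 := by
    rw [hA, Matrix.det_fin_two_of] at hdet; linarith
  have hNe : N = !![α, α * a + β; γ, γ * a + -α] := by
    rw [hN, hA, hS]
    ext i j
    fin_cases i <;> fin_cases j <;>
      simp [Matrix.mul_apply, Fin.sum_univ_two]
  -- Cayley–Hamilton
  have hCH : N * N = (a * γ) • N - 1 := by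
    rw [hNe]
    ext i j
    fin_cases i <;> fin_cases j <;>
      simp [Matrix.mul_apply, Fin.sum_univ_two, Matrix.one_apply] <;> nlinarith [hdet']
  have grec : ∀ m : ℕ, (N ^ (m + 2)) 1 0 = a * γ * (N ^ (m + 1)) 1 0 - (N ^ m) 1 0 := by
    intro m
    have h2 : N ^ (m + 2) = N ^ m * (N * N) := by
      rw [pow_add, pow_two]
    rw [h2, hCH, Matrix.mul_sub, Matrix.mul_smul, Matrix.mul_one]
    have h1 : N ^ (m + 1) = N ^ m * N := pow_succ N m
    simp [Matrix.sub_apply, Matrix.smul_apply, h1]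
  have hN10 : N 1 0 = γ := by rw [hNe]; simp
  -- invariant
  have key : ∀ m : ℕ, ((N ^ m) 1 0) ^ 2 + ((N ^ (m + 1)) 1 0) ^ 2
      - a * γ * ((N ^ m) 1 0) * ((N ^ (m + 1)) 1 0) = γ ^ 2 := by
    intro m
    induction m with
    | zero => simp [pow_one, hN10, Matrix.one_apply]
    | succ n ih =>
      rw [show n + 1 + 1 = n + 2 from rfl, grec n]
      linear_combination ih
  -- det N^k = 1
  have hdetN : N.det = 1 := by
    rw [hN, Matrix.det_mul, hA, hS, Matrix.det_fin_two_of, Matrix.det_fin_two_of]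
    nlinarith [hdet']
  have hdetNk : ((N ^ k) 0 0) * ((N ^ k) 1 1) - ((N ^ k) 0 1) * ((N ^ k) 1 0) = 1 := by
    have : (N ^ k).det = 1 := by rw [Matrix.det_pow, hdetN, one_pow]
    rw [Matrix.det_fin_two] at this
    linarith
  -- cross identity
  have hsucc : N ^ (k + 1) = N ^ k * N := pow_succ N k
  have hA1 : (N ^ (k + 1)) 0 0 = (N ^ k) 0 0 * α + (N ^ k) 0 1 * γ := by
    rw [hsucc, Matrix.mul_apply, Fin.sum_univ_two, hNe]; simp
  have hC1 : (N ^ (k + 1)) 1 0 = (N ^ k) 1 0 * α + (N ^ k) 1 1 * γ := by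
    rw [hsucc, Matrix.mul_apply, Fin.sum_univ_two, hNe]; simp
  have hcross : (N ^ k) 0 0 * (N ^ (k + 1)) 1 0 - (N ^ (k + 1)) 0 0 * (N ^ k) 1 0 = γ := by
    rw [hA1, hC1]; linear_combination γ * hdetNk
  set A0 := (N ^ k) 0 0
  set C0 := (N ^ k) 1 0
  set A1 := (N ^ (k + 1)) 0 0
  set C1 := (N ^ (k + 1)) 1 0
  have ha0 : (0 : ℝ) < a := by linarith
  -- positivity of C0 * C1
  have hdiff : A0 / C0 - A1 / C1 = γ / (C0 * C1) := by
    field_simp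
    linear_combination hcross
  have hpos : 0 < C0 * C1 := by
    have h := sub_pos.mpr horder
    rw [hdiff] at h
    rcases (div_pos_iff.mp h) with ⟨_, h2⟩ | ⟨h1, _⟩
    · exact h2
    · linarith
  have hkeyk := key k
  have hnum : a * C0 * C1 * (A1 * C0 - A0 * C1) + C0 ^ 2 + C1 ^ 2 = γ ^ 2 := by
    linear_combination (-(a * C0 * C1)) * hcross + hkeyk
  have hfinal : (A1 / C1 + 1 / (a * C1 ^ 2)) - (A0 / C0 - 1 / (a * C0 ^ 2))
      = (a * C0 * C1 * (A1 * C0 - A0 * C1) + C0 ^ 2 + C1 ^ 2) / (a * C0 ^ 2 * C1 ^ 2) := by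
    field_simp
    ring
  rw [hnum] at hfinal
  have hp : 0 < γ ^ 2 / (a * C0 ^ 2 * C1 ^ 2) := by positivity
  linarith [hfinal]
end

section
/- Let a, b, c be positive reals satisfying the Fricke equation a² + b² + c² = abc. Then the matrices T₀ = [[0, −a/c],[c/a, 0]], T₁ = [[a/c, t],[b/a, −a/c]], T₂ = [[a − b/c, s],[1, −a + b/c]] (with t, s chosen so each has determinant 1) satisfy T₂·T₁·T₀ = [[1, a],[0, 1]], i.e. their product is the translation z ↦ z + a. -/
theorem stmt_5 (a b c : ℝ) (ha : 0 < a) (hb : 0 < b) (hc : 0 < c)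
    (hFricke : a ^ 2 + b ^ 2 + c ^ 2 = a * b * c)
    (t s : ℝ)
    (T₀ T₁ T₂ : Matrix (Fin 2) (Fin 2) ℝ)
    (hT₀ : T₀ = !![0, -a / c; c / a, 0])
    (hT₁ : T₁ = !![a / c, t; b / a, -a / c]) (hdet₁ : T₁.det = 1)
    (hT₂ : T₂ = !![a - b / c, s; 1, -(a) + b / c]) (hdet₂ : T₂.det = 1) :
    T₂ * T₁ * T₀ = !![1, a; 0, 1] := by
  have ha' := ha.ne'
  have hb' := hb.ne'
  have hc' := hc.ne'
  subst hT₀ hT₁ hT₂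
  rw [Matrix.det_fin_two_of] at hdet₁ hdet₂
  have ht : t = -(a ^ 2 / c ^ 2 + 1) * a / b := by
    field_simp at hdet₁ ⊢
    linarith [hdet₁]
  have hs : s = -(a - b / c) ^ 2 - 1 := by nlinarith [hdet₂]
  subst ht hs
  ext i j
  fin_cases i <;> fin_cases j <;>
    simp [Matrix.mul_apply, Fin.sum_univ_succ]
  · field_simp
    linear_combination (b - a * c) * hFricke
  · field_simp
    linear_combination (b - a * c) * hFricke
  · field_simp
    left
    linear_combination (-a) * hFricke
  · field_simp
    linear_combination (-1) * hFricke
end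

section
/- Fix an integer m ≥ 2 and a reduced rational p/q with q ≥ 1. Define σ(r) = r + 1/(m·(den r)²) where den r is the denominator of r in lowest terms. Then the denominator of σ^k(p/q) in lowest terms is m^(2^k − 1)·q^(2^k), and σ^k(p/q) = p/q + m·∑_{n=1}^{k} (m·q)^(−2^n). -/
lemma den_sigma (m : ℕ) (hm : 2 ≤ m) (s : ℚ) :
    (s + 1 / (m * (s.den : ℚ) ^ 2)).den = m * s.den ^ 2 := by
  set d : ℕ := s.den with hd
  have hdpos : 0 < d := s.pos
  have hm0 : (0:ℤ) < m := by exact_mod_cast Nat.lt_of_lt_of_le two_pos hm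
  set a : ℤ := s.num * m * d + 1 with ha
  set b : ℤ := (m : ℤ) * d ^ 2 with hb
  have hb0 : (0:ℤ) < b := by positivity
  have heq : s + 1 / (m * (d : ℚ) ^ 2) = (a : ℚ) / (b : ℚ) := by
    have hs : (s : ℚ) = (s.num : ℚ) / (d : ℚ) := (Rat.num_div_den s).symm
    have hd0 : (d : ℚ) ≠ 0 := by positivity
    have hm0' : (m : ℚ) ≠ 0 := by positivity
    rw [hs, ha, hb]
    push_cast
    field_simp
  have hcop : IsCoprime a ((m : ℤ) * d) := by
    refine ⟨1, -s.num, ?_⟩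
    rw [ha]; ring
  have hcop2 : IsCoprime a b := by
    have h1 : IsCoprime a (m : ℤ) := hcop.of_mul_right_left
    have h2 : IsCoprime a (d : ℤ) := hcop.of_mul_right_right
    rw [hb]
    exact h1.mul_right (h2.pow_right)
  have hcop3 : Nat.Coprime a.natAbs b.natAbs := Int.isCoprime_iff_gcd_eq_one.mp hcop2
  have := Rat.den_div_eq_of_coprime hb0 hcop3
  rw [heq]
  have : (((a : ℚ) / (b : ℚ)).den : ℤ) = b := this
  have hnat : (((a : ℚ) / (b : ℚ)).den : ℤ) = ((m * d ^ 2 : ℕ) : ℤ) := by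
    rw [this, hb]; push_cast; ring
  exact_mod_cast hnat

theorem stmt_8 (m : ℕ) (hm : 2 ≤ m) (r : ℚ)
    (σ : ℚ → ℚ) (hσ : ∀ s : ℚ, σ s = s + 1 / (m * (s.den : ℚ) ^ 2)) :
    ∀ k : ℕ,
      ((σ^[k]) r).den = m ^ (2 ^ k - 1) * r.den ^ (2 ^ k) ∧
      (σ^[k]) r = r + m * ∑ n ∈ Finset.Icc 1 k, 1 / ((m * r.den : ℚ) ^ (2 ^ n)) := by
  intro k
  have hm0' : (m : ℚ) ≠ 0 := by positivity
  have hq0 : (r.den : ℚ) ≠ 0 := by exact_mod_cast r.den_ne_zero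
  induction k with
  | zero => simp
  | succ k ih =>
    obtain ⟨hden, heq⟩ := ih
    have hpow : (1:ℕ) ≤ 2 ^ k := Nat.one_le_two_pow
    have hiter : (σ^[k+1]) r = (σ^[k]) r + 1 / (m * (((σ^[k]) r).den : ℚ) ^ 2) := by
      rw [Function.iterate_succ_apply', hσ]
    have hdq : (((σ^[k]) r).den : ℚ) = (m : ℚ) ^ (2 ^ k - 1) * (r.den : ℚ) ^ (2 ^ k) := by
      rw [hden]; push_cast; ring
    constructor
    · rw [Function.iterate_succ_apply', hσ, den_sigma m hm, hden]
      have h1 : 2 ^ (k+1) - 1 = (2 ^ k - 1) * 2 + 1 := by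
        rw [pow_succ]; omega
      have h2 : 2 ^ (k+1) = 2 ^ k * 2 := by rw [pow_succ]
      rw [h1, h2]; ring
    · rw [hiter, hdq, heq]
      rw [Finset.sum_Icc_succ_top (by omega : 1 ≤ k + 1)]
      have hkey : ((m : ℚ) * r.den) ^ (2 ^ (k+1)) =
          m * (m * ((m : ℚ) ^ (2 ^ k - 1) * (r.den : ℚ) ^ (2 ^ k)) ^ 2) := by
        have h1 : 2 ^ (k+1) = (2 ^ k - 1) * 2 + 2 := by rw [pow_succ]; omega
        have h2 : 2 ^ (k+1) = 2 ^ k * 2 := by rw [pow_succ]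
        rw [mul_pow]
        rw [show ((m:ℚ))^(2^(k+1)) = (m:ℚ)^((2^k-1)*2+2) from by rw [← h1],
          show ((r.den:ℚ))^(2^(k+1)) = (r.den:ℚ)^(2^k*2) from by rw [← h2]]
        ring
      have hne : ((m : ℚ) ^ (2 ^ k - 1) * (r.den : ℚ) ^ (2 ^ k)) ≠ 0 := by positivity
      have : 1 / ((m:ℚ) * ((m : ℚ) ^ (2 ^ k - 1) * (r.den : ℚ) ^ (2 ^ k)) ^ 2)
          = m * (1 / ((m * r.den : ℚ) ^ (2 ^ (k+1)))) := by
        rw [hkey]; field_simp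
      rw [this]; ring
end

section
/- Fix an integer m ≥ 2 and a reduced rational p/q with q ≥ 1. The series α = p/q + m·∑_{n=1}^{∞} (m q)^(−2^n) converges, and α is strictly greater than σ^k(p/q) + 1/(m·(m^(2^k−1) q^(2^k))²) for every k ≥ 1, i.e. α lies strictly to the right of the right endpoint of the shadow of every right descendant. -/
lemma aux_den (m : ℕ) (hm : 1 ≤ m) (s : ℚ) :
    (s + 1/(m * (s.den:ℚ)^2)).den = m * s.den ^ 2 := by
  set n := s.num with hn
  set d := (s.den : ℤ) with hd
  have hd0 : 0 < d := Int.natCast_pos.mpr s.pos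
  have hm0 : 0 < (m : ℤ) := by exact_mod_cast hm
  have hb0 : 0 < (m : ℤ) * d ^ 2 := by positivity
  have hcop : IsCoprime ((m : ℤ) * n * d + 1) ((m : ℤ) * d ^ 2) := by
    have h1 : IsCoprime ((m : ℤ) * n * d + 1) ((m : ℤ) * d) :=
      ⟨1, -n, by ring⟩
    exact h1.of_mul_right_left.mul_right h1.of_mul_right_right.pow_right
  have hval : s + 1/(m * (s.den:ℚ)^2) =
      (((m : ℤ) * n * d + 1 : ℤ) : ℚ) / (((m : ℤ) * d ^ 2 : ℤ) : ℚ) := by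
    have hdq : ((s.den : ℚ)) ≠ 0 := by
      exact_mod_cast s.pos.ne'
    have hmq : ((m : ℚ)) ≠ 0 := by exact_mod_cast hm0.ne'
    nth_rewrite 1 [← Rat.num_div_den s]
    push_cast
    field_simp
    rw [hd]
    push_cast
    ring
  have hfin := Rat.den_div_eq_of_coprime hb0 (Int.isCoprime_iff_gcd_eq_one.mp hcop)
  rw [hval]
  rw [hd, hn] at hfin
  exact_mod_cast hfin

theorem stmt_9 (m : ℕ) (hm : 2 ≤ m) (r : ℚ)
    (σ : ℚ → ℚ) (hσ : ∀ s : ℚ, σ s = s + 1 / (m * (s.den : ℚ) ^ 2)) :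
    Summable (fun n : ℕ => (1 : ℝ) / ((m : ℝ) * r.den) ^ (2 ^ (n + 1))) ∧
    ∀ k : ℕ, 1 ≤ k →
      ((r : ℝ) + m * ∑' n : ℕ, (1 : ℝ) / ((m : ℝ) * r.den) ^ (2 ^ (n + 1)))
        > ((σ^[k]) r : ℝ)
            + 1 / (m * ((m : ℝ) ^ (2 ^ k - 1) * (r.den : ℝ) ^ (2 ^ k)) ^ 2) := by
  have hm1 : 1 ≤ m := by omega
  set q := r.den with hq
  have hq1 : 1 ≤ q := r.pos
  set Q : ℝ := (m : ℝ) * q with hQ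
  have hQ2 : (2 : ℝ) ≤ Q := by
    have h2 : (2 : ℝ) ≤ (m : ℝ) := by exact_mod_cast hm
    have h1 : (1 : ℝ) ≤ (q : ℝ) := by exact_mod_cast hq1
    nlinarith
  have hQ1 : (1 : ℝ) ≤ Q := by linarith
  have hQ0 : (0 : ℝ) < Q := by linarith
  set f : ℕ → ℝ := fun n => (1 : ℝ) / Q ^ (2 ^ (n + 1)) with hf
  have hfpos : ∀ n, 0 < f n := fun n => by positivity
  have hsum : Summable f := by
    refine Summable.of_nonneg_of_le (fun n => (hfpos n).le) (fun n => ?_)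
      (summable_geometric_of_lt_one (r := 1/Q) (by positivity)
        (by rw [div_lt_one hQ0]; linarith))
    rw [hf]
    simp only [div_pow, one_pow]
    apply one_div_le_one_div_of_le (by positivity)
    have hle : n ≤ 2 ^ (n + 1) :=
      le_of_lt (lt_of_lt_of_le (Nat.lt_two_pow_self (n := n))
        (Nat.pow_le_pow_right (by norm_num) (Nat.le_succ n)))
    gcongr
  refine ⟨hsum, ?_⟩
  have hcast : ∀ k : ℕ, (1 : ℝ) / (m * ((m : ℝ) ^ (2 ^ k - 1) * (q : ℝ) ^ (2 ^ k)) ^ 2)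
      = m * f k := by
    intro k
    obtain ⟨j, hj⟩ : ∃ j, 2 ^ k = j + 1 :=
      ⟨2 ^ k - 1, by have := Nat.one_le_two_pow (n := k); omega⟩
    have hj1 : 2 ^ k - 1 = j := by omega
    have hj2 : 2 ^ (k + 1) = 2 * j + 2 := by
      rw [pow_succ]; omega
    have hmR : (0:ℝ) < (m:ℝ) := by positivity
    have hqR : (0:ℝ) < (q:ℝ) := by exact_mod_cast hq1
    rw [hf]
    simp only
    rw [hj1, hj, hj2, hQ]
    field_simp
    ring
  have key : ∀ k : ℕ, ((σ^[k]) r : ℝ) = (r : ℝ) + m * ∑ n ∈ Finset.range k, f n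
      ∧ ((σ^[k]) r).den = m ^ (2 ^ k - 1) * q ^ (2 ^ k) := by
    intro k
    induction k with
    | zero => simp [hq]
    | succ k ih =>
      obtain ⟨ihv, ihd⟩ := ih
      rw [Function.iterate_succ_apply', hσ]
      constructor
      · push_cast
        rw [ihv, ihd, Finset.sum_range_succ]
        push_cast
        rw [hcast k]
        ring
      · rw [aux_den m hm1, ihd]
        obtain ⟨j, hj⟩ : ∃ j, 2 ^ k = j + 1 :=
          ⟨2 ^ k - 1, by have := Nat.one_le_two_pow (n := k); omega⟩
        have hj1 : 2 ^ k - 1 = j := by omega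
        have hj2 : 2 ^ (k + 1) = 2 * j + 2 := by rw [pow_succ]; omega
        have hj3 : 2 ^ (k + 1) - 1 = 2 * j + 1 := by omega
        rw [hj1, hj3, hj, hj2]
        ring
  intro k hk
  obtain ⟨hv, -⟩ := key k
  rw [hv, hcast k]
  have htail := Summable.sum_add_tsum_nat_add (f := f) (k + 1) hsum
  rw [Finset.sum_range_succ] at htail
  have hpos : 0 < ∑' n : ℕ, f (n + (k + 1)) :=
    Summable.tsum_pos ((summable_nat_add_iff (k+1)).mpr hsum) (fun n => (hfpos _).le) 0 (hfpos _)
  have hlt : ∑ n ∈ Finset.range k, f n + f k < ∑' n, f n := by linarith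
  have hmR : (0:ℝ) < (m:ℝ) := by positivity
  have := mul_lt_mul_of_pos_left hlt hmR
  rw [gt_iff_lt]
  rw [mul_add] at this
  linarith
end

section
/- (Folding Lemma) Let p/q = [a₀; a₁, …, a_n] be a finite continued fraction with a_n > 1 and q the denominator in lowest terms, and let m ≥ 2 be a natural number. Then p/q + (−1)^n/(m q²) = [a₀; a₁, …, a_n, m − 1, 1, a_n − 1, a_{n−1}, …, a₁]. -/
/-- Value of the finite continued fraction `[a₀; a₁, …, a_n]`, entries given as rationals. -/
def cfVal : ℤ → List ℕ → ℚ
  | a₀, [] => a₀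
  | a₀, a :: l => a₀ + 1 / cfVal a l

open Matrix

def Mi (a : ℕ) : Matrix (Fin 2) (Fin 2) ℤ := !![(a : ℤ), 1; 1, 0]

def Mp (l : List ℕ) : Matrix (Fin 2) (Fin 2) ℤ := (l.map Mi).prod

lemma Mp_nil : Mp [] = 1 := rfl

lemma Mp_cons (a : ℕ) (l : List ℕ) : Mp (a :: l) = Mi a * Mp l := by
  simp [Mp]

lemma Mp_append (u v : List ℕ) : Mp (u ++ v) = Mp u * Mp v := by
  simp [Mp]

lemma Mp_reverse (l : List ℕ) : Mp l.reverse = (Mp l)ᵀ := by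
  have hMi : ∀ a : ℕ, (Mi a)ᵀ = Mi a := by
    intro a; ext i j; fin_cases i <;> fin_cases j <;> simp [Mi]
  rw [Mp, Mp, Matrix.transpose_list_prod, List.map_map, ← List.map_reverse]
  congr 1
  apply List.map_congr_left
  intro a _
  exact (hMi a).symm

lemma Mp_entry_pos (l : List ℕ) (h : ∀ a ∈ l, 1 ≤ a) :
    1 ≤ Mp l 0 0 ∧ 0 ≤ Mp l 0 1 ∧ 0 ≤ Mp l 1 0 ∧ 0 ≤ Mp l 1 1 := by
  induction l with
  | nil => simp [Mp_nil, Matrix.one_fin_two]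
  | cons a l ih =>
    obtain ⟨h1, h2, h3, h4⟩ := ih (fun x hx => h x (List.mem_cons_of_mem _ hx))
    have ha : (1 : ℤ) ≤ (a : ℤ) := by exact_mod_cast h a List.mem_cons_self
    rw [Mp_cons, Matrix.eta_fin_two (Mp l), Mi, Matrix.mul_fin_two]
    refine ⟨?_, ?_, ?_, ?_⟩ <;> simp <;> nlinarith

lemma Mp_det (l : List ℕ) : (Mp l).det = (-1) ^ l.length := by
  induction l with
  | nil => simp [Mp_nil]
  | cons a l ih =>
    rw [Mp_cons, Matrix.det_mul, ih]
    simp [Mi, Matrix.det_fin_two_of, pow_succ, mul_comm]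

lemma cfVal_eq (l : List ℕ) (h : ∀ a ∈ l, 1 ≤ a) (a₀ : ℤ) :
    cfVal a₀ l = ((a₀ : ℚ) * (Mp l 0 0 : ℚ) + (Mp l 1 0 : ℚ)) / (Mp l 0 0 : ℚ) := by
  induction l generalizing a₀ with
  | nil => simp [cfVal, Mp_nil, Matrix.one_fin_two]
  | cons a l ih =>
    obtain ⟨h1, h2, h3, h4⟩ := Mp_entry_pos l (fun x hx => h x (List.mem_cons_of_mem _ hx))
    have ha : (1 : ℤ) ≤ (a : ℤ) := by exact_mod_cast h a List.mem_cons_self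
    have hden : (0 : ℤ) < a * Mp l 0 0 + Mp l 1 0 := by nlinarith
    have e1 : Mp (a :: l) 0 0 = a * Mp l 0 0 + Mp l 1 0 := by
      rw [Mp_cons, Matrix.eta_fin_two (Mp l), Mi, Matrix.mul_fin_two]; simp
    have e2 : Mp (a :: l) 1 0 = Mp l 0 0 := by
      rw [Mp_cons, Matrix.eta_fin_two (Mp l), Mi, Matrix.mul_fin_two]; simp
    rw [cfVal, ih (fun x hx => h x (List.mem_cons_of_mem _ hx)) a, e1, e2]
    have hX : (0 : ℚ) < (Mp l 0 0 : ℚ) := by exact_mod_cast h1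
    have hD : (0 : ℚ) < ((a : ℤ) * Mp l 0 0 + Mp l 1 0 : ℤ) := by exact_mod_cast hden
    push_cast at hD ⊢
    field_simp

theorem stmt_11 (m : ℕ) (hm : 2 ≤ m) (a₀ : ℤ) (as : List ℕ)
    (hne : as ≠ []) (hpos : ∀ a ∈ as, 1 ≤ a) (hlast : 1 < as.getLast hne)
    (p : ℤ) (q : ℕ) (hq : 0 < q)
    (hpq : ((p : ℚ) / q).num = p ∧ ((p : ℚ) / q).den = q)
    (hval : cfVal a₀ as = (p : ℚ) / q) :
    (p : ℚ) / q + (-1) ^ as.length / (m * (q : ℚ) ^ 2) =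
      cfVal a₀ (as ++ [m - 1, 1, as.getLast hne - 1] ++ as.dropLast.reverse) := by
  set g := as.getLast hne with hgdef
  have hg2 : 2 ≤ g := hlast
  have hdl : as.dropLast ++ [g] = as := List.dropLast_append_getLast hne
  set D := Mp as.dropLast with hDdef
  set a := D 0 0 with hadef
  set b := D 0 1 with hbdef
  set c := D 1 0 with hcdef
  set d := D 1 1 with hddef
  have hMg : Mp [g] = Mi g := by simp [Mp]
  have hX : Mp as = D * Mi g := by
    rw [← hdl, Mp_append, hMg]
  set Q := Mp as 0 0 with hQdef
  set Qt := Mp as 1 0 with hQtdef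
  have hQ : Q = a * g + b := by
    rw [hQdef, hX, Matrix.eta_fin_two D, Mi, Matrix.mul_fin_two]
    simp [← hadef, ← hbdef]
  have hQt : Qt = c * g + d := by
    rw [hQtdef, hX, Matrix.eta_fin_two D, Mi, Matrix.mul_fin_two]
    simp [← hcdef, ← hddef]
  obtain ⟨hQ1, h01, hQt0, h11⟩ := Mp_entry_pos as hpos
  have hQ0 : Q ≠ 0 := by omega
  have hq0 : (q : ℤ) ≠ 0 := by positivity
  -- coprimality of Q and Qt
  have hdetX : Q * Mp as 1 1 - Mp as 0 1 * Qt = (-1) ^ as.length := by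
    have := Mp_det as
    rwa [Matrix.det_fin_two] at this
  have hsq : ((-1 : ℤ) ^ as.length) * ((-1) ^ as.length) = 1 := by
    rw [← mul_pow]; norm_num
  have hcopQ : IsCoprime Qt Q := by
    refine ⟨-(-1) ^ as.length * Mp as 0 1, (-1) ^ as.length * Mp as 1 1, ?_⟩
    linear_combination (-1 : ℤ) ^ as.length * hdetX + hsq
  have hcopP : IsCoprime (a₀ * Q + Qt) Q := by
    have h2 := hcopQ.add_mul_left_left a₀
    rwa [show Qt + Q * a₀ = a₀ * Q + Qt from by ring] at h2
  -- identify p, q with the convergent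
  have hv : cfVal a₀ as = ((a₀ : ℚ) * (Q : ℚ) + (Qt : ℚ)) / (Q : ℚ) := cfVal_eq as hpos a₀
  have hQQ : (0 : ℚ) < (Q : ℚ) := by exact_mod_cast hQ1
  have hqQ : (0 : ℚ) < (q : ℚ) := by exact_mod_cast hq
  have hcross : (a₀ * Q + Qt) * q = p * Q := by
    have h1 : ((a₀ : ℚ) * (Q : ℚ) + (Qt : ℚ)) / (Q : ℚ) = (p : ℚ) / (q : ℚ) := by
      rw [← hv, hval]
    rw [div_eq_div_iff (ne_of_gt hQQ) (ne_of_gt hqQ)] at h1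
    exact_mod_cast h1
  have hred : p.natAbs.Coprime q := by
    have h := ((p : ℚ) / q).reduced
    rwa [hpq.1, hpq.2] at h
  have hcop_pq : IsCoprime (p : ℤ) ((q : ℕ) : ℤ) := by
    rw [Int.isCoprime_iff_gcd_eq_one]
    simpa [Int.gcd] using hred
  have hdvd1 : ((q : ℕ) : ℤ) ∣ Q := by
    refine hcop_pq.symm.dvd_of_dvd_mul_left ⟨a₀ * Q + Qt, ?_⟩
    linarith [hcross]
  have hdvd2 : Q ∣ ((q : ℕ) : ℤ) := by
    refine hcopP.symm.dvd_of_dvd_mul_left ⟨p, ?_⟩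
    linarith [hcross]
  have hQq : Q = (q : ℤ) := by
    apply Int.dvd_antisymm (by omega) (by positivity) hdvd2 hdvd1
  have hPp : a₀ * Q + Qt = p := by
    apply mul_right_cancel₀ hq0
    rw [hcross, hQq]
  -- the big list
  have hLpos : ∀ x ∈ as ++ [m - 1, 1, g - 1] ++ as.dropLast.reverse, 1 ≤ x := by
    intro x hx
    simp only [List.mem_append, List.mem_reverse, List.mem_cons,
      List.not_mem_nil, or_false] at hx
    rcases hx with (hx | hx | hx | hx) | hx
    · exact hpos x hx
    · omega
    · omega
    · omega
    · exact hpos x (List.dropLast_subset as hx)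
  rw [cfVal_eq _ hLpos a₀]
  have hm1 : ((m - 1 : ℕ) : ℤ) = (m : ℤ) - 1 := by omega
  have hg1 : ((g - 1 : ℕ) : ℤ) = (g : ℤ) - 1 := by omega
  have hDT : Dᵀ = !![a, c; b, d] := by
    rw [Matrix.eta_fin_two Dᵀ]
    simp [Matrix.transpose_apply, ← hadef, ← hbdef, ← hcdef, ← hddef]
  have hL : Mp (as ++ [m - 1, 1, g - 1] ++ as.dropLast.reverse) =
      D * Mi g * (Mi (m - 1) * (Mi 1 * (Mi (g - 1) * 1))) * !![a, c; b, d] := by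
    rw [Mp_append, Mp_append, Mp_reverse, hX, ← hDT]
    congr 1
  have hlen : as.length = as.dropLast.length + 1 := by
    conv_lhs => rw [← hdl]
    simp
  have hdetD : a * d - b * c = (-1) ^ as.dropLast.length := by
    have := Mp_det as.dropLast
    rwa [Matrix.det_fin_two] at this
  have hC00 : Mp (as ++ [m - 1, 1, g - 1] ++ as.dropLast.reverse) 0 0 = m * Q ^ 2 := by
    rw [hL, Matrix.eta_fin_two D, ← hadef, ← hbdef, ← hcdef, ← hddef, Mi, Mi, Mi, Mi,
      Matrix.one_fin_two, hm1, hg1]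
    simp only [Matrix.mul_fin_two]
    rw [hQ]
    simp only [Matrix.cons_val', Matrix.cons_val_zero, Matrix.empty_val',
      Matrix.cons_val_fin_one, Matrix.cons_val_one, Matrix.head_cons, Matrix.head_fin_const,
      Matrix.of_apply]
    push_cast
    ring
  have hC10 : Mp (as ++ [m - 1, 1, g - 1] ++ as.dropLast.reverse) 1 0
      = m * Q * Qt + (-1) ^ as.length := by
    rw [hL, Matrix.eta_fin_two D, ← hadef, ← hbdef, ← hcdef, ← hddef, Mi, Mi, Mi, Mi,
      Matrix.one_fin_two, hm1, hg1]
    simp only [Matrix.mul_fin_two]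
    rw [hQ, hQt, hlen, pow_succ, ← hdetD]
    simp only [Matrix.cons_val', Matrix.cons_val_zero, Matrix.empty_val',
      Matrix.cons_val_fin_one, Matrix.cons_val_one, Matrix.head_cons, Matrix.head_fin_const,
      Matrix.of_apply]
    push_cast
    ring
  have e1 : ((Mp (as ++ [m - 1, 1, g - 1] ++ as.dropLast.reverse) 0 0 : ℤ) : ℚ)
      = (m : ℚ) * (q : ℚ) ^ 2 := by
    rw [hC00, hQq]; push_cast; ring
  have e2 : ((Mp (as ++ [m - 1, 1, g - 1] ++ as.dropLast.reverse) 1 0 : ℤ) : ℚ)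
      = (m : ℚ) * (q : ℚ) * ((p : ℚ) - (a₀ : ℚ) * (q : ℚ)) + (-1) ^ as.length := by
    have hQt' : Qt = p - a₀ * (q : ℤ) := by rw [← hPp, hQq]; ring
    rw [hC10, hQq, hQt']; push_cast; ring
  rw [e1, e2]
  have hm0 : (m : ℚ) ≠ 0 := by positivity
  have hq0' : (q : ℚ) ≠ 0 := ne_of_gt hqQ
  field_simp
  ring
end

section
/- Let U be a finite word over an alphabet. Suppose (V_k) is a sequence of words satisfying V'_k := (V_k with the final |U| letters removed), V_k = V'_k ++ U, and the recursion V'_{k+1} = V'_k ++ U ++ reverse(V'_k) for all k. If U is not a palindrome, then for no k is V'_k a palindrome. -/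
theorem stmt_13 {α : Type*} (U : List α) (V V' : ℕ → List α)
    (hVk : ∀ k, V k = V' k ++ U)
    (hrec : ∀ k, V' (k + 1) = V' k ++ U ++ (V' k).reverse)
    (hU : U.reverse ≠ U) :
    ∀ k, 1 ≤ k → (V' k).reverse ≠ V' k := by
  intro k hk h
  obtain ⟨j, rfl⟩ : ∃ j, k = j + 1 := ⟨k - 1, by omega⟩
  apply hU
  rw [hrec j] at h
  simp only [List.reverse_append, List.reverse_reverse, List.append_assoc] at h
  exact List.append_cancel_right (List.append_cancel_left h)
end

section
/- Let (V_k)_{k≥1} be a sequence of finite nonempty words over an alphabet such that V_{k+1} begins with V_k ++ V_{k−1} for all k ≥ 2, and |V_{k+1}| = 2|V_k|. Let w be the infinite word that is the common limit (each V_k is a prefix of w). If w is eventually periodic, then there exists k₀ such that w is purely periodic and V_{k₀} is an integer power of the minimal period of w. -/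
theorem stmt_14 {α : Type*} (w : ℕ → α) (V : ℕ → List α)
    (hne : ∀ k, V k ≠ [])
    (hprefix : ∀ k, V k = (List.range (V k).length).map w)
    (hbegin : ∀ k, 2 ≤ k → (V k ++ V (k - 1)) <+: V (k + 1))
    (hlen : ∀ k, 1 ≤ k → (V (k + 1)).length = 2 * (V k).length)
    (hev : ∃ N T : ℕ, 0 < T ∧ ∀ n, N ≤ n → w (n + T) = w n) :
    ∃ T : ℕ, 0 < T ∧ (∀ n, w (n + T) = w n) ∧
      (∀ T' : ℕ, 0 < T' → (∀ n, w (n + T') = w n) → T ≤ T') ∧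
      ∃ k₀ j : ℕ, V k₀ = (List.replicate j ((List.range T).map w)).flatten := by
  obtain ⟨N, T0, hT0, hper⟩ := hev
  set L : ℕ → ℕ := fun k => (V k).length with hL
  have hLpos : ∀ k, 0 < L k := fun k => List.length_pos_iff.2 (hne k)
  have hLdef : ∀ k, (V k).length = L k := fun _ => rfl
  -- value extraction
  have hw : ∀ k i, i < L k → (V k)[i]? = some (w i) := by
    intro k i h
    conv_lhs => rw [hprefix k]
    rw [List.getElem?_map, List.getElem?_range h, Option.map_some]
  -- key repetition lemma
  have hkey : ∀ k, 2 ≤ k → ∀ n, n < L (k - 1) → w (n + L k) = w n := by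
    intro k hk n hn
    obtain ⟨t, ht⟩ := hbegin k hk
    have hlen2 : L k + L (k - 1) ≤ L (k + 1) := by
      have := (hbegin k hk).length_le
      simpa using this
    have h1 : (V (k + 1))[L k + n]? = some (w (L k + n)) :=
      hw (k + 1) (L k + n) (by omega)
    have h2 : (V (k + 1))[L k + n]? = some (w n) := by
      rw [← ht, List.getElem?_append_left (by simp only [List.length_append, hLdef]; omega),
        List.getElem?_append_right (Nat.le_add_right _ _)]
      simpa using hw (k - 1) n hn
    have := h1.symm.trans h2
    rw [add_comm]
    exact Option.some.inj this
  -- length grows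
  have hLge : ∀ k, 1 ≤ k → k ≤ L k := by
    intro k hk
    induction k, hk using Nat.le_induction with
    | base => exact hLpos 1
    | succ k hk ih =>
      have h1 := hlen k hk
      simp only [hLdef] at h1
      omega
  have hLstep : ∀ k, 2 ≤ k → L k = 2 * L (k - 1) := by
    intro k hk
    have h1 := hlen (k - 1) (by omega)
    have hk1 : k - 1 + 1 = k := by omega
    rw [hk1] at h1
    simpa only [hLdef] using h1
  -- purely periodic with period T0
  have hpure : ∀ n, w (n + T0) = w n := by
    intro n
    set k := n + T0 + N + 2 with hkdef
    have hk2 : 2 ≤ k := by omega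
    have hk1 : L (k - 1) ≥ n + T0 + N + 1 := by
      have := hLge (k - 1) (by omega)
      omega
    have hLkN : N ≤ L k := by
      have := hLstep k hk2
      omega
    have e1 : w (n + T0 + L k) = w (n + T0) := hkey k hk2 (n + T0) (by omega)
    have e2 : w (n + L k) = w n := hkey k hk2 n (by omega)
    have e3 : w (n + L k + T0) = w (n + L k) := hper (n + L k) (by omega)
    have e4 : n + L k + T0 = n + T0 + L k := by ring
    rw [e4] at e3
    rw [← e1, e3, e2]
  -- minimal period T
  have hex : ∃ T, 0 < T ∧ ∀ n, w (n + T) = w n := ⟨T0, hT0, hpure⟩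
  classical
  set T := Nat.find hex with hTdef
  obtain ⟨hTpos, hTper⟩ := Nat.find_spec hex
  rw [← hTdef] at hTpos hTper
  have hrep : ∀ q n, w (n + T * q) = w n := by
    intro q
    induction q with
    | zero => simp
    | succ q ih =>
      intro n
      have : n + T * (q + 1) = (n + T * q) + T := by ring
      rw [this, hTper, ih]
  have hmod : ∀ m, w m = w (m % T) := by
    intro m
    conv_lhs => rw [← Nat.mod_add_div m T]
    exact hrep (m / T) (m % T)
  -- choose k₀
  set k := T + 2 with hkdef
  have hk2 : 2 ≤ k := by omega
  have hk1 : T + 1 ≤ L (k - 1) := hLge (k - 1) (by omega)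
  have hdvd : T ∣ L k := by
    by_contra hnd
    set r := L k % T with hrdef
    have hr0 : 0 < r := Nat.pos_of_ne_zero (fun h => hnd (Nat.dvd_of_mod_eq_zero h))
    have hrT : r < T := Nat.mod_lt _ hTpos
    have hrper : ∀ n, w (n + r) = w n := by
      intro n
      have hnT : n % T < L (k - 1) := by
        have h := Nat.mod_lt n hTpos
        omega
      have h1 : w (n % T + L k) = w (n % T) := hkey k hk2 (n % T) hnT
      have h2 : n % T + L k = (n % T + r) + T * (L k / T) := by
        have := Nat.mod_add_div (L k) T
        omega
      rw [h2, hrep] at h1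
      have hmm : (n + r) % T = (n % T + r) % T := by
        conv_lhs => rw [Nat.add_mod, Nat.mod_eq_of_lt hrT]
      calc w (n + r) = w ((n + r) % T) := hmod _
        _ = w ((n % T + r) % T) := by rw [hmm]
        _ = w (n % T + r) := (hmod _).symm
        _ = w (n % T) := h1
        _ = w n := (hmod n).symm
    exact Nat.find_min hex hrT ⟨hr0, hrper⟩
  obtain ⟨j, hj⟩ := hdvd
  have hflat : ∀ m, (List.replicate m ((List.range T).map w)).flatten
      = (List.range (T * m)).map w := by
    intro m
    induction m with
    | zero => simp
    | succ m ih =>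
      rw [List.replicate_succ', List.flatten_append, ih, Nat.mul_succ,
        List.range_add, List.map_append]
      congr 1
      simp only [List.flatten_cons, List.flatten_nil, List.append_nil, List.map_map]
      refine List.map_congr_left (fun i hi => ?_)
      simp only [Function.comp_apply]
      rw [add_comm, hrep]
  refine ⟨T, hTpos, hTper, fun T' hT'pos hT'per => Nat.find_min' hex ⟨hT'pos, hT'per⟩,
    k, j, ?_⟩
  rw [hflat, ← hj, hprefix k]
end

section
/- Fix an integer m ≥ 2 and reduced rational p/q. The number α = p/q + m·∑_{k=1}^{∞} (m q)^{−2^k} is irrational. -/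
set_option maxHeartbeats 800000

private lemma aux_summable {c : ℝ} (h0 : 0 ≤ c) (h1 : c < 1) :
    Summable (fun n : ℕ => c ^ (2 ^ (n + 1))) := by
  have hbig : Summable (fun n : ℕ => c ^ (n + 1)) := by
    simpa [pow_succ, mul_comm] using (summable_geometric_of_lt_one h0 h1).mul_left c
  exact Summable.of_nonneg_of_le (fun n => pow_nonneg h0 _)
    (fun n => pow_le_pow_of_le_one h0 h1.le (Nat.lt_two_pow_self (n := n + 1)).le) hbig

private lemma aux_irrational {b : ℕ} (hb : 2 ≤ b) :
    Irrational (∑' n : ℕ, (1 : ℝ) / (b : ℝ) ^ (2 ^ (n + 1))) := by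
  set c : ℝ := 1 / (b : ℝ) with hc_def
  have hbR : (2 : ℝ) ≤ (b : ℝ) := by exact_mod_cast hb
  have hb0 : (0 : ℝ) < b := by linarith
  have hbne : (b : ℝ) ≠ 0 := hb0.ne'
  have hc0 : 0 < c := by positivity
  have hc2 : c ≤ 1 / 2 := by
    rw [hc_def, div_le_div_iff₀ hb0 (by norm_num)]; linarith
  have hc1 : c < 1 := lt_of_le_of_lt hc2 (by norm_num)
  have hf : ∀ n : ℕ, (1 : ℝ) / (b : ℝ) ^ (2 ^ (n + 1)) = c ^ (2 ^ (n + 1)) := by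
    intro n; rw [hc_def, one_div_pow, one_div]
  simp only [hf]
  have hsum : Summable (fun n : ℕ => c ^ (2 ^ (n + 1))) := aux_summable hc0.le hc1
  rintro ⟨q, hq⟩
  set N : ℕ := q.den with hN_def
  have hDbig : 2 * q.den < b ^ (2 ^ N) := by
    have h1 : q.den < 2 ^ N := Nat.lt_two_pow_self
    have h2 : 2 ^ (N + 1) ≤ 2 ^ (2 ^ N) := Nat.pow_le_pow_right (by norm_num) (Nat.lt_two_pow_self (n := N))
    have h3 : 2 ^ (2 ^ N) ≤ b ^ (2 ^ N) := Nat.pow_le_pow_left hb _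
    calc 2 * q.den < 2 * 2 ^ N := by omega
    _ = 2 ^ (N + 1) := by ring
    _ ≤ b ^ (2 ^ N) := le_trans h2 h3
  have hD0 : 0 < b ^ (2 ^ N) := Nat.pow_pos (by omega)
  have hDR : (0 : ℝ) < ((b ^ (2 ^ N) : ℕ) : ℝ) := by exact_mod_cast hD0
  -- partial sum times b^(2^N) is an integer
  have hDP : ((b ^ (2 ^ N) : ℕ) : ℝ) * ∑ n ∈ Finset.range N, c ^ (2 ^ (n + 1))
      = ((∑ n ∈ Finset.range N, b ^ (2 ^ N - 2 ^ (n + 1)) : ℕ) : ℝ) := by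
    rw [Nat.cast_sum, Finset.mul_sum]
    apply Finset.sum_congr rfl
    intro n hn
    have hle : 2 ^ (n + 1) ≤ 2 ^ N :=
      Nat.pow_le_pow_right (by norm_num) (Finset.mem_range.mp hn)
    push_cast
    rw [pow_sub₀ (b : ℝ) hbne hle, hc_def, one_div, inv_pow]
  set K : ℕ := ∑ n ∈ Finset.range N, b ^ (2 ^ N - 2 ^ (n + 1)) with hK_def
  -- tail
  set T : ℝ := ∑' k : ℕ, c ^ (2 ^ (k + N + 1)) with hT_def
  have hsplit : (∑ n ∈ Finset.range N, c ^ (2 ^ (n + 1))) + T = (q : ℝ) := by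
    rw [hq, hT_def]
    exact Summable.sum_add_tsum_nat_add N hsum
  have hsumT : Summable (fun k : ℕ => c ^ (2 ^ (k + N + 1))) := by
    have := (summable_nat_add_iff (f := fun n : ℕ => c ^ (2 ^ (n + 1))) N).mpr hsum
    simpa using this
  have hTpos : 0 < T := Summable.tsum_pos hsumT (fun k => by positivity) 0 (by positivity)
  have hTle : T ≤ 2 * c ^ (2 ^ (N + 1)) := by
    have hterm : ∀ k : ℕ, c ^ (2 ^ (k + N + 1)) ≤ c ^ (2 ^ (N + 1)) * c ^ k := by
      intro k
      rw [← pow_add]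
      apply pow_le_pow_of_le_one hc0.le hc1.le
      have h1 : k < 2 ^ k := Nat.lt_two_pow_self
      have h2 : 2 ^ (N + 1) * 2 ^ k = 2 ^ (k + N + 1) := by
        rw [← pow_add]; ring_nf
      have h3 : 2 ≤ 2 ^ (N + 1) := Nat.one_lt_two_pow (by omega)
      nlinarith [(Nat.pow_pos (show 0 < 2 by norm_num) : 0 < 2 ^ k)]
    have hgsum : Summable (fun k : ℕ => c ^ (2 ^ (N + 1)) * c ^ k) :=
      (summable_geometric_of_lt_one hc0.le hc1).mul_left _
    calc T ≤ ∑' k : ℕ, c ^ (2 ^ (N + 1)) * c ^ k := Summable.tsum_le_tsum hterm hsumT hgsum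
      _ = c ^ (2 ^ (N + 1)) * (1 - c)⁻¹ := by
          rw [tsum_mul_left, tsum_geometric_of_lt_one hc0.le hc1]
      _ ≤ c ^ (2 ^ (N + 1)) * 2 := by
          apply mul_le_mul_of_nonneg_left _ (by positivity)
          rw [inv_le_comm₀ (by linarith) (by norm_num)]
          linarith
      _ = 2 * c ^ (2 ^ (N + 1)) := by ring
  -- the integer
  set z : ℤ := q.num * (b ^ (2 ^ N) : ℕ) - (q.den : ℤ) * K with hz_def
  have hden : (q.den : ℝ) * (q : ℝ) = (q.num : ℝ) := by
    rw [Rat.cast_def]; field_simp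
  have hzR : (z : ℝ) = (q.den : ℝ) * ((b ^ (2 ^ N) : ℕ) : ℝ) * T := by
    have hTeq : T = (q : ℝ) - ∑ n ∈ Finset.range N, c ^ (2 ^ (n + 1)) := by
      linarith [hsplit]
    rw [hTeq, hz_def]
    push_cast
    have hDP' := hDP
    push_cast at hDP'
    linear_combination (-(b:ℝ) ^ (2 ^ N)) * hden + (q.den : ℝ) * hDP'
  have hcD : c ^ (2 ^ (N + 1)) = (1 : ℝ) / ((b ^ (2 ^ N) : ℕ) : ℝ) ^ 2 := by
    rw [hc_def, one_div_pow]
    push_cast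
    rw [← pow_mul, pow_succ, one_div]
  have hzpos : (0 : ℝ) < z := by
    rw [hzR]
    have hq0 : (0 : ℝ) < q.den := by exact_mod_cast q.pos
    positivity
  have hzlt : (z : ℝ) < 1 := by
    rw [hzR]
    have hq0 : (0 : ℝ) < q.den := by exact_mod_cast q.pos
    have hbound : (q.den : ℝ) * ((b ^ (2 ^ N) : ℕ) : ℝ) * T
        ≤ (q.den : ℝ) * ((b ^ (2 ^ N) : ℕ) : ℝ) * (2 * c ^ (2 ^ (N + 1))) :=
      mul_le_mul_of_nonneg_left hTle (by positivity)
    have heq : (q.den : ℝ) * ((b ^ (2 ^ N) : ℕ) : ℝ) * (2 * c ^ (2 ^ (N + 1)))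
        = 2 * q.den / ((b ^ (2 ^ N) : ℕ) : ℝ) := by
      rw [hcD]; field_simp
    have hlt : 2 * (q.den : ℝ) / ((b ^ (2 ^ N) : ℕ) : ℝ) < 1 := by
      rw [div_lt_one hDR]
      exact_mod_cast hDbig
    calc (q.den : ℝ) * ((b ^ (2 ^ N) : ℕ) : ℝ) * T
        ≤ 2 * q.den / ((b ^ (2 ^ N) : ℕ) : ℝ) := by rw [← heq]; exact hbound
      _ < 1 := hlt
  have h1 : 0 < z := by exact_mod_cast hzpos
  have h2 : z < 1 := by exact_mod_cast hzlt
  omega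

theorem stmt_19 (m : ℕ) (hm : 2 ≤ m) (r : ℚ) :
    Irrational ((r : ℝ) + m * ∑' n : ℕ, (1 : ℝ) / ((m : ℝ) * r.den) ^ (2 ^ (n + 1))) := by
  have hb : 2 ≤ m * r.den := le_trans hm (Nat.le_mul_of_pos_right m r.pos)
  have hcast : ((m : ℝ) * (r.den : ℝ)) = ((m * r.den : ℕ) : ℝ) := by push_cast; ring
  have h2 : Irrational (∑' n : ℕ, (1 : ℝ) / ((m : ℝ) * r.den) ^ (2 ^ (n + 1))) := by
    rw [hcast]; exact aux_irrational hb
  exact (h2.natCast_mul (m := m) (by omega)).ratCast_add (q := r)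
end
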